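/- Let c, m be real numbers with m ≠ 0 and consider the polynomial ring ℝ[v₁,v₂] in two variables. Define the ℝ-linear operators on ℝ[v₁,v₂]: Ř₀ := ∂/∂v₁ − (1/(2m))·∂²/∂v₂², Ľ₀ := (c − 1/2)·(multiplication by v₁) + (multiplication by v₁²) ∘ Ř₀, and ρ̌₀ := (c − 1/2)·id + 2·(multiplication by v₁) ∘ Ř₀. Then these operators satisfy the sl(2) relations [Ř₀, Ľ₀] = ρ̌₀, [Ř₀, ρ̌₀] = 2·Ř₀, and [ρ̌₀, Ľ₀] = 2·Ľ₀, where [A,B] := A∘B − B∘A. -/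

import Mathlib

open MvPolynomial

lemma sl2_aux {A : Type*} [Ring A] [Algebra ℝ A] (a : ℝ) (R M : A)
    (h : R * M = M * R + 1) :
    (R * (a • M + (M * M) * R) - (a • M + (M * M) * R) * R
        = a • (1 : A) + 2 • (M * R)) ∧
    (R * (a • (1 : A) + 2 • (M * R)) - (a • (1 : A) + 2 • (M * R)) * R
        = 2 • R) ∧
    ((a • (1 : A) + 2 • (M * R)) * (a • M + (M * M) * R)
        - (a • M + (M * M) * R) * (a • (1 : A) + 2 • (M * R))
        = 2 • (a • M + (M * M) * R)) := by
  have hlie : ⁅R, M⁆ = 1 := by rw [Ring.lie_def, h]; abel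
  have leib : ∀ x y z : A, ⁅x, y * z⁆ = ⁅x, y⁆ * z + y * ⁅x, z⁆ := by
    intro x y z; simp only [Ring.lie_def]; noncomm_ring
  have leib' : ∀ x y z : A, ⁅x * y, z⁆ = x * ⁅y, z⁆ + ⁅x, z⁆ * y := by
    intro x y z; simp only [Ring.lie_def]; noncomm_ring
  have hone : ⁅R, (1 : A)⁆ = 0 := by simp [Ring.lie_def]
  have hone' : ⁅(1 : A), M⁆ = 0 := by simp [Ring.lie_def]
  have hr0 : ∀ x : A, R * (M * x) = M * (R * x) + x := fun x => by
    rw [← mul_assoc, h, add_mul, mul_assoc, one_mul]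
  refine ⟨?_, ?_, ?_⟩
  · simp only [mul_add, add_mul, mul_assoc, smul_mul_assoc, mul_smul_comm, one_mul,
      mul_one, hr0, h, smul_add, smul_smul, two_smul]
    abel
  · simp only [mul_add, add_mul, mul_assoc, smul_mul_assoc, mul_smul_comm, one_mul,
      mul_one, hr0, h, smul_add, smul_smul, two_smul]
    abel
  · rw [← Ring.lie_def]
    simp only [lie_add, add_lie, lie_smul, smul_lie, leib, leib', hlie, hone, hone',
      lie_self, two_smul, Ring.lie_def, h]
    have hr : ∀ x : A, R * (M * x) = M * (R * x) + x := fun x => by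
      rw [← mul_assoc, h, add_mul, mul_assoc, one_mul]
    simp only [mul_add, add_mul, mul_assoc, smul_mul_assoc, mul_smul_comm, one_mul,
      mul_one, hr, h, smul_add, smul_smul, two_smul]
    abel

/-- The check-realization of the subtracted Schrödinger elements as differential
operators on ℝ[v₁,v₂]: with `Ř₀ = ∂/∂v₁ − (1/(2m))∂²/∂v₂²`,
`Ľ₀ = (c−1/2)v₁ + v₁²·Ř₀`, `ρ̌₀ = (c−1/2) + 2v₁·Ř₀`, one has the sl(2) relations
`[Ř₀,Ľ₀] = ρ̌₀`, `[Ř₀,ρ̌₀] = 2Ř₀`, `[ρ̌₀,Ľ₀] = 2Ľ₀`. -/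
theorem schrodinger_check_sl2 (c m : ℝ) (hm : m ≠ 0) :
    let P := MvPolynomial (Fin 2) ℝ
    let d₁ : Module.End ℝ P := (pderiv (0 : Fin 2)).toLinearMap
    let d₂ : Module.End ℝ P := (pderiv (1 : Fin 2)).toLinearMap
    let mulv₁ : Module.End ℝ P := LinearMap.mulLeft ℝ (X 0)
    let mulv₁sq : Module.End ℝ P := LinearMap.mulLeft ℝ (X 0 ^ 2)
    let R₀ : Module.End ℝ P := d₁ - (1 / (2 * m)) • (d₂ * d₂)
    let L₀ : Module.End ℝ P := (c - 1 / 2) • mulv₁ + mulv₁sq * R₀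
    let ρ₀ : Module.End ℝ P := (c - 1 / 2) • (1 : Module.End ℝ P) + 2 • (mulv₁ * R₀)
    (R₀ * L₀ - L₀ * R₀ = ρ₀) ∧
    (R₀ * ρ₀ - ρ₀ * R₀ = 2 • R₀) ∧
    (ρ₀ * L₀ - L₀ * ρ₀ = 2 • L₀) := by
  have h1' : ((pderiv (0 : Fin 2)).toLinearMap : Module.End ℝ (MvPolynomial (Fin 2) ℝ))
      * LinearMap.mulLeft ℝ (X 0)
      = LinearMap.mulLeft ℝ (X 0) * (pderiv (0 : Fin 2)).toLinearMap + 1 := by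
    refine LinearMap.ext fun p => ?_
    simp only [Module.End.mul_apply, LinearMap.add_apply, Module.End.one_apply,
      LinearMap.mulLeft_apply, Derivation.coeFn_coe]
    simp [pderiv_mul, pderiv_X_self, add_comm]
  have h2' : ((pderiv (1 : Fin 2)).toLinearMap : Module.End ℝ (MvPolynomial (Fin 2) ℝ))
      * LinearMap.mulLeft ℝ (X 0)
      = LinearMap.mulLeft ℝ (X 0) * (pderiv (1 : Fin 2)).toLinearMap := by
    refine LinearMap.ext fun p => ?_
    simp only [Module.End.mul_apply, LinearMap.mulLeft_apply, Derivation.coeFn_coe]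
    simp [pderiv_mul, pderiv_X_of_ne (by decide : (0 : Fin 2) ≠ 1)]
  have hS' : (LinearMap.mulLeft ℝ (X 0 ^ 2) : Module.End ℝ (MvPolynomial (Fin 2) ℝ))
      = LinearMap.mulLeft ℝ (X 0) * LinearMap.mulLeft ℝ (X 0) := by
    refine LinearMap.ext fun p => ?_
    simp only [Module.End.mul_apply, LinearMap.mulLeft_apply]
    ring
  intro P d₁ d₂ mulv₁ mulv₁sq R₀ L₀ ρ₀
  have h1 : d₁ * mulv₁ = mulv₁ * d₁ + 1 := h1'
  have h2 : d₂ * mulv₁ = mulv₁ * d₂ := h2'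
  have hRM : R₀ * mulv₁ = mulv₁ * R₀ + 1 := by
    have h22 : d₂ * d₂ * mulv₁ = mulv₁ * (d₂ * d₂) := by
      rw [mul_assoc, h2, ← mul_assoc, h2, mul_assoc]
    simp only [R₀, sub_mul, mul_sub, smul_mul_assoc, mul_smul_comm, h1, h22]
    abel
  have hS : mulv₁sq = mulv₁ * mulv₁ := hS'
  have := sl2_aux (c - 1 / 2) R₀ mulv₁ hRM
  simpa only [L₀, ρ₀, hS] using this
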